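/- Bias of the TSLS estimand under an invalid instrument and unmeasured confounding (Equation (4)): let H be a real Hilbert space, X a complete subspace, and y, d, z, u ∈ H such that all residuals appearing below are nonzero and ⟨d^{⊥X}, z^{⊥X}⟩ ≠ 0 (in particular d^{⊥X+span(z)} ≠ 0, u^{⊥X+span(z)} ≠ 0, d^{⊥X+span(z)+span(u)} ≠ 0, y^{⊥X+span(z)+span(d)} ≠ 0, u^{⊥X+span(z)+span(d)} ≠ 0, z^{⊥X+span(d)} ≠ 0). Then β_{y∼d|X+span(z)+span(u)} = ⟨y^{⊥X}, z^{⊥X}⟩/⟨d^{⊥X}, z^{⊥X}⟩ − [f_{y∼z|X+span(d)}/R_{d∼z|X} + R_{y∼u|X+span(z)+span(d)}·f_{d∼u|X+span(z)}]·σ_{y∼X+span(z)+span(d)}/σ_{d∼X+span(z)}. -/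

import Mathlib

/-!
R²-calculus in real Hilbert spaces (Freidling & Zhao, "Optimization-based
Sensitivity Analysis for Unmeasured Confounding using Partial Correlations").
-/

noncomputable section

open Submodule RealInnerProductSpace

variable {H : Type*} [NormedAddCommGroup H] [InnerProductSpace ℝ H]

/-- The residual `h^{⊥M} = h − P_M h` of `h` after projecting onto `M`. -/
def resid (M : Submodule ℝ H) [HasOrthogonalProjection M] (h : H) : H :=
  h - (orthogonalProjection M h : H)

/-- The marginal R²-value `R²_{y∼X} = 1 − ‖y^{⊥X}‖²/‖y‖²`. -/
def R2 (y : H) (X : Submodule ℝ H) [HasOrthogonalProjection X] : ℝ :=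
  1 - ‖resid X y‖ ^ 2 / ‖y‖ ^ 2

/-- The partial R²-value `R²_{y∼X|Z} = (R²_{y∼X+Z} − R²_{y∼Z})/(1 − R²_{y∼Z})`. -/
def R2p (y : H) (X Z : Submodule ℝ H) [HasOrthogonalProjection (X ⊔ Z)]
    [HasOrthogonalProjection Z] : ℝ :=
  (R2 y (X ⊔ Z) - R2 y Z) / (1 - R2 y Z)

/-- The partial R-value `R_{y∼x|Z} = ⟪y^{⊥Z}, x^{⊥Z}⟫/(‖y^{⊥Z}‖·‖x^{⊥Z}‖)`. -/
def Rp (y x : H) (Z : Submodule ℝ H) [HasOrthogonalProjection Z] : ℝ :=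
  ⟪resid Z y, resid Z x⟫ / (‖resid Z y‖ * ‖resid Z x‖)

/-- The partial f-value `f_{y∼x|Z} = R_{y∼x|Z}/√(1 − R²_{y∼x|Z})`. -/
def fp (y x : H) (Z : Submodule ℝ H) [HasOrthogonalProjection Z] : ℝ :=
  Rp y x Z / Real.sqrt (1 - Rp y x Z ^ 2)

/-- The regression estimand `β_{y∼d|M} = ⟪y^{⊥M}, d^{⊥M}⟫/‖d^{⊥M}‖²`. -/
def betaReg (y d : H) (M : Submodule ℝ H) [HasOrthogonalProjection M] : ℝ :=
  ⟪resid M y, resid M d⟫ / ‖resid M d‖ ^ 2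

/-- `σ_{y∼M} = ‖y^{⊥M}‖`. -/
def sigv (y : H) (M : Submodule ℝ H) [HasOrthogonalProjection M] : ℝ :=
  ‖resid M y‖

/-! ### Auxiliary lemmas -/

lemma resid_mem_orthogonal (M : Submodule ℝ H) [HasOrthogonalProjection M] (h : H) :
    resid M h ∈ Mᗮ := Submodule.sub_starProjection_mem_orthogonal h

lemma resid_congr {M N : Submodule ℝ H} [HasOrthogonalProjection M] [HasOrthogonalProjection N]
    (h : M = N) (x : H) : resid M x = resid N x := by subst h; rfl

/-- Recursive formula for a residual after enlarging the subspace by one vector. -/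
lemma resid_sup_span (M : Submodule ℝ H) [HasOrthogonalProjection M] (w : H)
    [HasOrthogonalProjection (M ⊔ ℝ ∙ w)] (hw : resid M w ≠ 0) (h : H) :
    resid (M ⊔ ℝ ∙ w) h
      = resid M h - (⟪resid M h, resid M w⟫ / ‖resid M w‖ ^ 2) • resid M w := by
  set c : ℝ := ⟪resid M h, resid M w⟫ / ‖resid M w‖ ^ 2 with hc
  have hrw2 : ‖resid M w‖ ^ 2 ≠ 0 := pow_ne_zero _ (norm_ne_zero_iff.mpr hw)
  have hmem : ((orthogonalProjection M h : H) + c • resid M w) ∈ M ⊔ ℝ ∙ w := by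
    apply Submodule.add_mem
    · exact Submodule.mem_sup_left (orthogonalProjection M h).2
    · apply Submodule.smul_mem
      exact Submodule.sub_mem _
        (Submodule.mem_sup_right (Submodule.mem_span_singleton_self w))
        (Submodule.mem_sup_left (orthogonalProjection M w).2)
  have hkey : h - ((orthogonalProjection M h : H) + c • resid M w)
      = resid M h - c • resid M w := by
    simp only [resid]; abel
  have horth : h - ((orthogonalProjection M h : H) + c • resid M w) ∈ (M ⊔ ℝ ∙ w)ᗮ := by
    rw [hkey, ← Submodule.inf_orthogonal]
    refine Submodule.mem_inf.mpr ⟨?_, ?_⟩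
    · exact Submodule.sub_mem _ (resid_mem_orthogonal M h)
        (Submodule.smul_mem _ _ (resid_mem_orthogonal M w))
    · rw [Submodule.mem_orthogonal_singleton_iff_inner_right]
      have hw' : w = resid M w + (orthogonalProjection M w : H) := by simp [resid]
      have h1 : ⟪(orthogonalProjection M w : H), resid M h⟫ = 0 := by
        have := (Submodule.mem_orthogonal _ _).1 (resid_mem_orthogonal M h)
        exact this _ (orthogonalProjection M w).2
      have h2 : ⟪(orthogonalProjection M w : H), resid M w⟫ = 0 := by
        have := (Submodule.mem_orthogonal _ _).1 (resid_mem_orthogonal M w)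
        exact this _ (orthogonalProjection M w).2
      have e1 : ⟪w, resid M h⟫ = ⟪resid M w, resid M h⟫ := by
        nth_rewrite 1 [hw']; rw [inner_add_left, h1, add_zero]
      have e2 : ⟪w, resid M w⟫ = ‖resid M w‖ ^ 2 := by
        nth_rewrite 1 [hw']; rw [inner_add_left, h2, add_zero, real_inner_self_eq_norm_sq]
      rw [inner_sub_right, real_inner_smul_right, e1, e2, hc,
        real_inner_comm (resid M w) (resid M h)]
      field_simp
      ring
  have hproj : (orthogonalProjection (M ⊔ ℝ ∙ w) h : H)
      = (orthogonalProjection M h : H) + c • resid M w :=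
    Submodule.eq_starProjection_of_mem_orthogonal hmem horth
  rw [resid, hproj]
  simp [resid]; abel

lemma inner_residpair (a b w : H) (hw : w ≠ 0) :
    ⟪a - (⟪a, w⟫ / ‖w‖ ^ 2) • w, b - (⟪b, w⟫ / ‖w‖ ^ 2) • w⟫
      = ⟪a, b⟫ - ⟪a, w⟫ * ⟪b, w⟫ / ‖w‖ ^ 2 := by
  have hw2 : ‖w‖ ^ 2 ≠ 0 := pow_ne_zero _ (norm_ne_zero_iff.mpr hw)
  rw [inner_sub_left, inner_sub_right, inner_sub_right, real_inner_smul_left,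
    real_inner_smul_left, real_inner_smul_right, real_inner_smul_right,
    real_inner_self_eq_norm_sq, real_inner_comm w b]
  field_simp
  ring

lemma norm_residpair (a w : H) (hw : w ≠ 0) :
    ‖a - (⟪a, w⟫ / ‖w‖ ^ 2) • w‖ ^ 2 = ‖a‖ ^ 2 - ⟪a, w⟫ ^ 2 / ‖w‖ ^ 2 := by
  rw [← real_inner_self_eq_norm_sq, inner_residpair a a w hw, real_inner_self_eq_norm_sq]
  ring

/-- The f-value rewritten without a square root. -/
lemma fp_eq (yv xv : H) (Z : Submodule ℝ H) [HasOrthogonalProjection Z]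
    [HasOrthogonalProjection (Z ⊔ ℝ ∙ xv)]
    (hy : resid Z yv ≠ 0) (hx : resid Z xv ≠ 0) (h3 : resid (Z ⊔ ℝ ∙ xv) yv ≠ 0) :
    fp yv xv Z = ⟪resid Z yv, resid Z xv⟫ / (‖resid Z xv‖ * ‖resid (Z ⊔ ℝ ∙ xv) yv‖) := by
  have hna : ‖resid Z yv‖ ≠ 0 := norm_ne_zero_iff.mpr hy
  have hnb : ‖resid Z xv‖ ≠ 0 := norm_ne_zero_iff.mpr hx
  have hnc : ‖resid (Z ⊔ ℝ ∙ xv) yv‖ ≠ 0 := norm_ne_zero_iff.mpr h3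
  have hcs : ‖resid (Z ⊔ ℝ ∙ xv) yv‖ ^ 2
      = ‖resid Z yv‖ ^ 2 - ⟪resid Z yv, resid Z xv⟫ ^ 2 / ‖resid Z xv‖ ^ 2 := by
    rw [resid_sup_span Z xv hx yv]; exact norm_residpair _ _ hx
  have h1R : 1 - Rp yv xv Z ^ 2 = (‖resid (Z ⊔ ℝ ∙ xv) yv‖ / ‖resid Z yv‖) ^ 2 := by
    rw [Rp, div_pow, div_pow, hcs]
    field_simp
  rw [fp, h1R, Real.sqrt_sq (by positivity), Rp]
  field_simp

/-- The purely algebraic identity behind the TSLS bias formula. -/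
lemma final_algebra (a b e p q r nD nZ n2d n2u n3y n3u nC nA : ℝ)
    (he : e ≠ 0) (hnD : nD ≠ 0) (hnZ : nZ ≠ 0) (h2d : n2d ≠ 0) (h2u : n2u ≠ 0)
    (h3y : n3y ≠ 0) (h3u : n3u ≠ 0) (hC : nC ≠ 0)
    (hr : r = a - b * e / nZ ^ 2) (ht : n2d ^ 2 = nD ^ 2 - e ^ 2 / nZ ^ 2)
    (h3u2 : n3u ^ 2 = n2u ^ 2 - q ^ 2 / n2d ^ 2) (hC2 : nC ^ 2 = n2d ^ 2 - q ^ 2 / n2u ^ 2)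
    (F1 : nA * nD = n2d * nZ) (F2 : n3u * n2d = nC * n2u) :
    (r - p * q / n2u ^ 2) / nC ^ 2
      = b / e - ((b - a * e / nD ^ 2) / (nA * n3y) / (e / (nD * nZ))
          + (p - r * q / n2d ^ 2) / (n3y * n3u) * (q / (n2u * nC))) * (n3y / n2d) := by
  have hA' : nA = n2d * nZ / nD := by rw [eq_div_iff hnD]; exact F1
  have hC' : nC = n3u * n2d / n2u := by rw [eq_div_iff h2u]; exact F2.symm
  have hq2 : nD ^ 2 - e ^ 2 / nZ ^ 2 ≠ 0 := by rw [← ht]; exact pow_ne_zero 2 h2d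
  have hts : n2d ^ 2 - q ^ 2 / n2u ^ 2 ≠ 0 := by rw [← hC2]; exact pow_ne_zero 2 hC
  have hst : n2u ^ 2 - q ^ 2 / n2d ^ 2 ≠ 0 := by rw [← h3u2]; exact pow_ne_zero 2 h3u
  rw [show ((b - a * e / nD ^ 2) / (nA * n3y) / (e / (nD * nZ))
          + (p - r * q / n2d ^ 2) / (n3y * n3u) * (q / (n2u * nC))) * (n3y / n2d)
      = (b - a * e / nD ^ 2) / (nA * n3y) / (e / (nD * nZ)) * (n3y / n2d)
          + (p - r * q / n2d ^ 2) / (n3y * n3u) * (q / (n2u * nC)) * (n3y / n2d) from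
    add_mul _ _ _]
  rw [show (b - a * e / nD ^ 2) / (nA * n3y) / (e / (nD * nZ)) * (n3y / n2d)
      = (b - a * e / nD ^ 2) * nD ^ 2 / (e * n2d ^ 2) from by
    rw [hA']; field_simp]
  rw [show (p - r * q / n2d ^ 2) / (n3y * n3u) * (q / (n2u * nC)) * (n3y / n2d)
      = (p - r * q / n2d ^ 2) * q / (n3u ^ 2 * n2d ^ 2) from by
    rw [hC']; field_simp]
  rw [hC2, h3u2]
  have step1 : b / e - (b - a * e / nD ^ 2) * nD ^ 2 / (e * n2d ^ 2) = r / n2d ^ 2 := by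
    rw [hr, ht]
    rw [div_sub_div _ _ he (mul_ne_zero he hq2), div_eq_div_iff
      (mul_ne_zero he (mul_ne_zero he hq2)) hq2]
    field_simp
    ring
  have step2 : r / n2d ^ 2 - (p - r * q / n2d ^ 2) * q / ((n2u ^ 2 - q ^ 2 / n2d ^ 2) * n2d ^ 2)
      = (r - p * q / n2u ^ 2) / (n2d ^ 2 - q ^ 2 / n2u ^ 2) := by
    rw [div_sub_div _ _ (pow_ne_zero 2 h2d) (mul_ne_zero hst (pow_ne_zero 2 h2d)),
      div_eq_div_iff (mul_ne_zero (pow_ne_zero 2 h2d)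
        (mul_ne_zero hst (pow_ne_zero 2 h2d))) hts]
    field_simp
    ring
  linarith [step1, step2]

/-- bias of the TSLS estimand under an invalid instrument and
unmeasured confounding (Equation (4)). -/
theorem tsls_bias [CompleteSpace H]
    (X : Submodule ℝ H) [CompleteSpace X] (y d z u : H)
    [CompleteSpace ↥(X ⊔ (ℝ ∙ z))] [CompleteSpace ↥(X ⊔ (ℝ ∙ d))]
    [CompleteSpace ↥(X ⊔ (ℝ ∙ z) ⊔ (ℝ ∙ d))] [CompleteSpace ↥(X ⊔ (ℝ ∙ z) ⊔ (ℝ ∙ u))]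
    (hy : resid X y ≠ 0) (hd : resid X d ≠ 0) (hz : resid X z ≠ 0) (hu : resid X u ≠ 0)
    (hdz : ⟪resid X d, resid X z⟫ ≠ 0)
    (hd2 : resid (X ⊔ (ℝ ∙ z)) d ≠ 0) (hu2 : resid (X ⊔ (ℝ ∙ z)) u ≠ 0)
    (hd3 : resid (X ⊔ (ℝ ∙ z) ⊔ (ℝ ∙ u)) d ≠ 0)
    (hy2 : resid (X ⊔ (ℝ ∙ d)) y ≠ 0) (hz2 : resid (X ⊔ (ℝ ∙ d)) z ≠ 0)
    (hy3 : resid (X ⊔ (ℝ ∙ z) ⊔ (ℝ ∙ d)) y ≠ 0)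
    (hu3 : resid (X ⊔ (ℝ ∙ z) ⊔ (ℝ ∙ d)) u ≠ 0) :
    betaReg y d (X ⊔ (ℝ ∙ z) ⊔ (ℝ ∙ u)) =
      ⟪resid X y, resid X z⟫ / ⟪resid X d, resid X z⟫ -
        (fp y z (X ⊔ (ℝ ∙ d)) / Rp d z X +
            Rp y u (X ⊔ (ℝ ∙ z) ⊔ (ℝ ∙ d)) * fp d u (X ⊔ (ℝ ∙ z))) *
          (sigv y (X ⊔ (ℝ ∙ z) ⊔ (ℝ ∙ d)) / sigv d (X ⊔ (ℝ ∙ z))) := by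
  have hsup : X ⊔ (ℝ ∙ z) ⊔ (ℝ ∙ d) = X ⊔ (ℝ ∙ d) ⊔ (ℝ ∙ z) :=
    sup_right_comm X (ℝ ∙ z) (ℝ ∙ d)
  haveI iC : CompleteSpace ↥(X ⊔ (ℝ ∙ d) ⊔ (ℝ ∙ z)) :=
    hsup ▸ (inferInstance : CompleteSpace ↥(X ⊔ (ℝ ∙ z) ⊔ (ℝ ∙ d)))
  have hcong : resid (X ⊔ (ℝ ∙ d) ⊔ (ℝ ∙ z)) y = resid (X ⊔ (ℝ ∙ z) ⊔ (ℝ ∙ d)) y :=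
    resid_congr hsup.symm y
  have hy3' : resid (X ⊔ (ℝ ∙ d) ⊔ (ℝ ∙ z)) y ≠ 0 := by rw [hcong]; exact hy3
  have hfp1 : fp y z (X ⊔ (ℝ ∙ d)) = ⟪resid (X ⊔ (ℝ ∙ d)) y, resid (X ⊔ (ℝ ∙ d)) z⟫ /
      (‖resid (X ⊔ (ℝ ∙ d)) z‖ * ‖resid (X ⊔ (ℝ ∙ z) ⊔ (ℝ ∙ d)) y‖) := by
    rw [fp_eq y z (X ⊔ (ℝ ∙ d)) hy2 hz2 hy3', hcong]
  have hfp2 : fp d u (X ⊔ (ℝ ∙ z)) = ⟪resid (X ⊔ (ℝ ∙ z)) d, resid (X ⊔ (ℝ ∙ z)) u⟫ /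
      (‖resid (X ⊔ (ℝ ∙ z)) u‖ * ‖resid (X ⊔ (ℝ ∙ z) ⊔ (ℝ ∙ u)) d‖) :=
    fp_eq d u (X ⊔ (ℝ ∙ z)) hd2 hu2 hd3
  -- scalar expansions of inner products and squared norms of residuals
  have hCi : ⟪resid (X ⊔ (ℝ ∙ z) ⊔ (ℝ ∙ u)) y, resid (X ⊔ (ℝ ∙ z) ⊔ (ℝ ∙ u)) d⟫
      = ⟪resid (X ⊔ (ℝ ∙ z)) y, resid (X ⊔ (ℝ ∙ z)) d⟫
        - ⟪resid (X ⊔ (ℝ ∙ z)) y, resid (X ⊔ (ℝ ∙ z)) u⟫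
          * ⟪resid (X ⊔ (ℝ ∙ z)) d, resid (X ⊔ (ℝ ∙ z)) u⟫
          / ‖resid (X ⊔ (ℝ ∙ z)) u‖ ^ 2 := by
    rw [resid_sup_span (X ⊔ (ℝ ∙ z)) u hu2 y, resid_sup_span (X ⊔ (ℝ ∙ z)) u hu2 d]
    exact inner_residpair _ _ _ hu2
  have hCn : ‖resid (X ⊔ (ℝ ∙ z) ⊔ (ℝ ∙ u)) d‖ ^ 2
      = ‖resid (X ⊔ (ℝ ∙ z)) d‖ ^ 2
        - ⟪resid (X ⊔ (ℝ ∙ z)) d, resid (X ⊔ (ℝ ∙ z)) u⟫ ^ 2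
          / ‖resid (X ⊔ (ℝ ∙ z)) u‖ ^ 2 := by
    rw [resid_sup_span (X ⊔ (ℝ ∙ z)) u hu2 d]; exact norm_residpair _ _ hu2
  have h3i : ⟪resid (X ⊔ (ℝ ∙ z) ⊔ (ℝ ∙ d)) y, resid (X ⊔ (ℝ ∙ z) ⊔ (ℝ ∙ d)) u⟫
      = ⟪resid (X ⊔ (ℝ ∙ z)) y, resid (X ⊔ (ℝ ∙ z)) u⟫
        - ⟪resid (X ⊔ (ℝ ∙ z)) y, resid (X ⊔ (ℝ ∙ z)) d⟫
          * ⟪resid (X ⊔ (ℝ ∙ z)) d, resid (X ⊔ (ℝ ∙ z)) u⟫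
          / ‖resid (X ⊔ (ℝ ∙ z)) d‖ ^ 2 := by
    rw [resid_sup_span (X ⊔ (ℝ ∙ z)) d hd2 y, resid_sup_span (X ⊔ (ℝ ∙ z)) d hd2 u,
      inner_residpair _ _ _ hd2,
      real_inner_comm (resid (X ⊔ (ℝ ∙ z)) u) (resid (X ⊔ (ℝ ∙ z)) d)]
  have h3un : ‖resid (X ⊔ (ℝ ∙ z) ⊔ (ℝ ∙ d)) u‖ ^ 2
      = ‖resid (X ⊔ (ℝ ∙ z)) u‖ ^ 2
        - ⟪resid (X ⊔ (ℝ ∙ z)) d, resid (X ⊔ (ℝ ∙ z)) u⟫ ^ 2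
          / ‖resid (X ⊔ (ℝ ∙ z)) d‖ ^ 2 := by
    rw [resid_sup_span (X ⊔ (ℝ ∙ z)) d hd2 u, norm_residpair _ _ hd2,
      real_inner_comm (resid (X ⊔ (ℝ ∙ z)) u) (resid (X ⊔ (ℝ ∙ z)) d)]
  have hsA : ⟪resid (X ⊔ (ℝ ∙ d)) y, resid (X ⊔ (ℝ ∙ d)) z⟫
      = ⟪resid X y, resid X z⟫
        - ⟪resid X y, resid X d⟫ * ⟪resid X d, resid X z⟫ / ‖resid X d‖ ^ 2 := by
    rw [resid_sup_span X d hd y, resid_sup_span X d hd z, inner_residpair _ _ _ hd,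
      real_inner_comm (resid X z) (resid X d)]
  have hA2 : ‖resid (X ⊔ (ℝ ∙ d)) z‖ ^ 2
      = ‖resid X z‖ ^ 2 - ⟪resid X d, resid X z⟫ ^ 2 / ‖resid X d‖ ^ 2 := by
    rw [resid_sup_span X d hd z, norm_residpair _ _ hd,
      real_inner_comm (resid X z) (resid X d)]
  have hri : ⟪resid (X ⊔ (ℝ ∙ z)) y, resid (X ⊔ (ℝ ∙ z)) d⟫
      = ⟪resid X y, resid X d⟫
        - ⟪resid X y, resid X z⟫ * ⟪resid X d, resid X z⟫ / ‖resid X z‖ ^ 2 := by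
    rw [resid_sup_span X z hz y, resid_sup_span X z hz d]
    exact inner_residpair _ _ _ hz
  have hti : ‖resid (X ⊔ (ℝ ∙ z)) d‖ ^ 2
      = ‖resid X d‖ ^ 2 - ⟪resid X d, resid X z⟫ ^ 2 / ‖resid X z‖ ^ 2 := by
    rw [resid_sup_span X z hz d]; exact norm_residpair _ _ hz
  -- nonzero norms
  have hDn : ‖resid X d‖ ≠ 0 := norm_ne_zero_iff.mpr hd
  have hZn : ‖resid X z‖ ≠ 0 := norm_ne_zero_iff.mpr hz
  have h2dn : ‖resid (X ⊔ (ℝ ∙ z)) d‖ ≠ 0 := norm_ne_zero_iff.mpr hd2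
  have h2un : ‖resid (X ⊔ (ℝ ∙ z)) u‖ ≠ 0 := norm_ne_zero_iff.mpr hu2
  have h3yn : ‖resid (X ⊔ (ℝ ∙ z) ⊔ (ℝ ∙ d)) y‖ ≠ 0 := norm_ne_zero_iff.mpr hy3
  have h3un' : ‖resid (X ⊔ (ℝ ∙ z) ⊔ (ℝ ∙ d)) u‖ ≠ 0 := norm_ne_zero_iff.mpr hu3
  have hCnn : ‖resid (X ⊔ (ℝ ∙ z) ⊔ (ℝ ∙ u)) d‖ ≠ 0 := norm_ne_zero_iff.mpr hd3
  -- the two norm-product identities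
  have F1 : ‖resid (X ⊔ (ℝ ∙ d)) z‖ * ‖resid X d‖
      = ‖resid (X ⊔ (ℝ ∙ z)) d‖ * ‖resid X z‖ := by
    have hsq : (‖resid (X ⊔ (ℝ ∙ d)) z‖ * ‖resid X d‖) ^ 2
        = (‖resid (X ⊔ (ℝ ∙ z)) d‖ * ‖resid X z‖) ^ 2 := by
      rw [mul_pow, mul_pow, hA2, hti]
      field_simp
    calc ‖resid (X ⊔ (ℝ ∙ d)) z‖ * ‖resid X d‖
        = Real.sqrt ((‖resid (X ⊔ (ℝ ∙ d)) z‖ * ‖resid X d‖) ^ 2) :=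
          (Real.sqrt_sq (by positivity)).symm
      _ = Real.sqrt ((‖resid (X ⊔ (ℝ ∙ z)) d‖ * ‖resid X z‖) ^ 2) := by rw [hsq]
      _ = ‖resid (X ⊔ (ℝ ∙ z)) d‖ * ‖resid X z‖ := Real.sqrt_sq (by positivity)
  have F2 : ‖resid (X ⊔ (ℝ ∙ z) ⊔ (ℝ ∙ d)) u‖ * ‖resid (X ⊔ (ℝ ∙ z)) d‖
      = ‖resid (X ⊔ (ℝ ∙ z) ⊔ (ℝ ∙ u)) d‖ * ‖resid (X ⊔ (ℝ ∙ z)) u‖ := by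
    have hsq : (‖resid (X ⊔ (ℝ ∙ z) ⊔ (ℝ ∙ d)) u‖ * ‖resid (X ⊔ (ℝ ∙ z)) d‖) ^ 2
        = (‖resid (X ⊔ (ℝ ∙ z) ⊔ (ℝ ∙ u)) d‖ * ‖resid (X ⊔ (ℝ ∙ z)) u‖) ^ 2 := by
      rw [mul_pow, mul_pow, h3un, hCn]
      field_simp
    calc ‖resid (X ⊔ (ℝ ∙ z) ⊔ (ℝ ∙ d)) u‖ * ‖resid (X ⊔ (ℝ ∙ z)) d‖
        = Real.sqrt ((‖resid (X ⊔ (ℝ ∙ z) ⊔ (ℝ ∙ d)) u‖ * ‖resid (X ⊔ (ℝ ∙ z)) d‖) ^ 2) :=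
          (Real.sqrt_sq (by positivity)).symm
      _ = Real.sqrt ((‖resid (X ⊔ (ℝ ∙ z) ⊔ (ℝ ∙ u)) d‖ * ‖resid (X ⊔ (ℝ ∙ z)) u‖) ^ 2) := by
          rw [hsq]
      _ = ‖resid (X ⊔ (ℝ ∙ z) ⊔ (ℝ ∙ u)) d‖ * ‖resid (X ⊔ (ℝ ∙ z)) u‖ :=
          Real.sqrt_sq (by positivity)
  rw [betaReg, hfp1, hfp2]
  simp only [Rp, sigv]
  rw [hCi, hsA, h3i]
  exact final_algebra ⟪resid X y, resid X d⟫ ⟪resid X y, resid X z⟫ ⟪resid X d, resid X z⟫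
    ⟪resid (X ⊔ (ℝ ∙ z)) y, resid (X ⊔ (ℝ ∙ z)) u⟫
    ⟪resid (X ⊔ (ℝ ∙ z)) d, resid (X ⊔ (ℝ ∙ z)) u⟫
    ⟪resid (X ⊔ (ℝ ∙ z)) y, resid (X ⊔ (ℝ ∙ z)) d⟫
    ‖resid X d‖ ‖resid X z‖ ‖resid (X ⊔ (ℝ ∙ z)) d‖ ‖resid (X ⊔ (ℝ ∙ z)) u‖
    ‖resid (X ⊔ (ℝ ∙ z) ⊔ (ℝ ∙ d)) y‖ ‖resid (X ⊔ (ℝ ∙ z) ⊔ (ℝ ∙ d)) u‖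
    ‖resid (X ⊔ (ℝ ∙ z) ⊔ (ℝ ∙ u)) d‖ ‖resid (X ⊔ (ℝ ∙ d)) z‖
    hdz hDn hZn h2dn h2un h3yn h3un' hCnn hri hti h3un hCn F1 F2
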